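/- For ρ > 1 and α > 0, define c_α^{(n)}(ρ) := log n − min_{P ∈ P_n(ρ)} H_α(P) for integers n ≥ 2, and c_α^{(1)}(ρ) := 0. Then for every n ∈ ℕ: (i) 0 ≤ c_α^{(n)}(ρ) ≤ log ρ; (ii) c_α^{(n)}(ρ) ≤ c_α^{(2n)}(ρ); and (iii) for fixed n and ρ, the map α ↦ c_α^{(n)}(ρ) is monotonically increasing on (0,∞). -/

import Mathlib

open Finset

/-- `P` is a probability mass function, strictly positive on `{1,…,n}`. -/
def IsPMF (n : ℕ) (P : ℕ → ℝ) : Prop :=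
  (∀ i ∈ Finset.Icc 1 n, 0 < P i) ∧ ∑ i ∈ Finset.Icc 1 n, P i = 1

/-- The ratio of the maximal to minimal mass of `P` on `{1,…,n}` is at most `ρ`. -/
def RatioBdd (n : ℕ) (ρ : ℝ) (P : ℕ → ℝ) : Prop :=
  ∀ i ∈ Finset.Icc 1 n, ∀ j ∈ Finset.Icc 1 n, P i ≤ ρ * P j

/-- `P` is nonincreasing on `{1,…,n}`. -/
def DecOn (n : ℕ) (P : ℕ → ℝ) : Prop :=
  ∀ i ∈ Finset.Icc 1 n, ∀ j ∈ Finset.Icc 1 n, i ≤ j → P j ≤ P i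

/-- Sum of the `k` largest masses of `P` on `{1,…,n}`. -/
noncomputable def topSum (n : ℕ) (P : ℕ → ℝ) (k : ℕ) : ℝ :=
  sSup ((fun s : Finset ℕ => ∑ i ∈ s, P i) '' {s | s ⊆ Finset.Icc 1 n ∧ s.card = k})

/-- `P ≺ Q`: `P` is majorized by `Q`, both viewed on `{1,…,n}`. -/
def MajorizedBy (n : ℕ) (P Q : ℕ → ℝ) : Prop :=
  ∀ k, 1 ≤ k → k ≤ n - 1 → topSum n P k ≤ topSum n Q k

/-- Zero-padding of a pmf on `{1,…,m}` outside of `{1,…,m}`. -/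
def padTo (m : ℕ) (Q : ℕ → ℝ) : ℕ → ℝ := fun i => if i ≤ m then Q i else 0

/-- Rényi entropy of order `α` of `P` on `{1,…,n}` (Shannon entropy for `α = 1`);
natural logarithms. -/
noncomputable def renyiH (n : ℕ) (α : ℝ) (P : ℕ → ℝ) : ℝ :=
  if α = 1 then -∑ i ∈ Finset.Icc 1 n, P i * Real.log (P i)
  else (1 - α)⁻¹ * Real.log (∑ i ∈ Finset.Icc 1 n, P i ^ α)

/-- `c_α^{(n)}(ρ) = log n − min_{P ∈ 𝒫_n(ρ)} H_α(P)` for `n ≥ 2`, and `0` for `n ≤ 1`. -/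
noncomputable def cN (α ρ : ℝ) (n : ℕ) : ℝ :=
  if n ≤ 1 then 0
  else Real.log n - sInf (renyiH n α '' {P | IsPMF n P ∧ RatioBdd n ρ P})

/-- The closed-form expression for `c_α^{(∞)}(ρ)`, `α ∈ (0,1) ∪ (1,∞)`. -/
noncomputable def cInfinity (α ρ : ℝ) : ℝ :=
  (α - 1)⁻¹ * Real.log (1 + (1 + α * (ρ - 1) - ρ ^ α) / ((1 - α) * (ρ - 1)))
    - α / (α - 1) * Real.log (1 + (1 + α * (ρ - 1) - ρ ^ α) / ((1 - α) * (ρ ^ α - 1)))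

/-- `v(α) := c_α^{(∞)}(2)`, with the continuous extension at `α = 1`. -/
noncomputable def vFun (α : ℝ) : ℝ :=
  if α = 1 then Real.log (2 / (Real.exp 1 * Real.log 2))
  else Real.log ((α - 1) / ((2 : ℝ) ^ α - 2)) - α / (α - 1) * Real.log (α / ((2 : ℝ) ^ α - 1))

/-- `n*`: the maximal `i ∈ {1,…,m−1}` with `P i ≥ (m−i)⁻¹ ∑_{j=i+1}^n P j`. -/
noncomputable def nStar (n m : ℕ) (P : ℕ → ℝ) : ℕ :=
  sSup {i : ℕ | 1 ≤ i ∧ i ≤ m - 1 ∧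
    ((m : ℝ) - (i : ℝ))⁻¹ * ∑ j ∈ Finset.Icc (i + 1) n, P j ≤ P i}

/-- The pmf of `X̃_m` on `{1,…,m}`, built from a nonincreasing pmf `P` on `{1,…,n}`. -/
noncomputable def tildeX (n m : ℕ) (P : ℕ → ℝ) : ℕ → ℝ := fun i =>
  if P 1 < 1 / (m : ℝ) then 1 / (m : ℝ)
  else if i ≤ nStar n m P then P i
  else ((m : ℝ) - (nStar n m P : ℝ))⁻¹ * ∑ j ∈ Finset.Icc (nStar n m P + 1) n, P j

/-- The pmf of `Ỹ_m` on `{1,…,m}`. -/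
def tildeY (n m : ℕ) (P : ℕ → ℝ) : ℕ → ℝ := fun i =>
  if i = 1 then ∑ j ∈ Finset.Icc 1 (n - m + 1), P j else P (n - m + i)

/-- The pmf of `f(X)`: `(push n f P) j = ∑_{i ∈ {1,…,n}, f i = j} P i`. -/
def push (n : ℕ) (f : ℕ → ℕ) (P : ℕ → ℝ) : ℕ → ℝ := fun j =>
  ∑ i ∈ (Finset.Icc 1 n).filter (fun i => f i = j), P i

/-- The set `{1,…,n}^k` of source sequences of length `k`. -/
def seqSet (n k : ℕ) : Finset (Fin k → ℕ) := Fintype.piFinset fun _ => Finset.Icc 1 n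

/-- Product (i.i.d.) probability of a sequence. -/
def prodP (k : ℕ) (P : ℕ → ℝ) (x : Fin k → ℕ) : ℝ := ∏ i, P (x i)

/-- `g` is a ranking function for the i.i.d. vector on `{1,…,n}^k` with marginal `P`:
a bijection onto `{1,…,n^k}` which assigns smaller ranks to larger masses. -/
def IsRanking (n k : ℕ) (P : ℕ → ℝ) (g : (Fin k → ℕ) → ℕ) : Prop :=
  Set.BijOn g (↑(seqSet n k)) (Set.Icc 1 (n ^ k)) ∧
    ∀ x ∈ seqSet n k, ∀ y ∈ seqSet n k, prodP k P y < prodP k P x → g x < g y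

/-- The `ρ`-th guessing moment `E[g(Z^k)^ρ]`. -/
noncomputable def gmoment (n k : ℕ) (P : ℕ → ℝ) (g : (Fin k → ℕ) → ℕ) (ρ : ℝ) : ℝ :=
  ∑ x ∈ seqSet n k, prodP k P x * (g x : ℝ) ^ ρ

/-- Kraft inequality for a `D`-ary length function on `{1,…,n}^k`. -/
def Kraft (n k D : ℕ) (ℓ : (Fin k → ℕ) → ℕ) : Prop :=
  ∑ x ∈ seqSet n k, (D : ℝ) ^ (-(ℓ x : ℝ)) ≤ 1

/-- Scaled cumulant generating function `Λ_k(ρ)` of the codeword lengths (base-`D` log). -/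
noncomputable def cgf (n k D : ℕ) (P : ℕ → ℝ) (ℓ : (Fin k → ℕ) → ℕ) (ρ : ℝ) : ℝ :=
  (1 / (k : ℝ)) * Real.logb D (∑ x ∈ seqSet n k, prodP k P x * (D : ℝ) ^ (ρ * (ℓ x : ℝ)))

/-- `i_β` of Lemma 2. -/
noncomputable def iBeta (n : ℕ) (ρ β : ℝ) : ℕ := Nat.floor ((1 - (n : ℝ) * β) / ((ρ - 1) * β))

/-- The pmf `Q_β` of Lemma 2. -/
noncomputable def Qbeta (n : ℕ) (ρ β : ℝ) : ℕ → ℝ := fun j =>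
  if j ≤ iBeta n ρ β then ρ * β
  else if j = iBeta n ρ β + 1 then
    1 - ((n : ℝ) + (iBeta n ρ β : ℝ) * ρ - (iBeta n ρ β : ℝ) - 1) * β
  else β

namespace Stmt2Aux

lemma pmf_one_le (hP : IsPMF n P) : 1 ≤ n := by
  by_contra h
  have h0 : n = 0 := by omega
  have := hP.2
  simp [h0] at this

lemma pmf_nonempty (hP : IsPMF n P) : (Finset.Icc 1 n).Nonempty := by
  rw [Finset.nonempty_Icc]; exact pmf_one_le hP

lemma S_pos (hP : IsPMF n P) (α : ℝ) : 0 < ∑ i ∈ Finset.Icc 1 n, P i ^ α :=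
  Finset.sum_pos (fun i hi => Real.rpow_pos_of_pos (hP.1 i hi) α) (pmf_nonempty hP)

lemma jensen_log (hP : IsPMF n P) (α : ℝ) :
    (α - 1) * ∑ i ∈ Finset.Icc 1 n, P i * Real.log (P i)
      ≤ Real.log (∑ i ∈ Finset.Icc 1 n, P i ^ α) := by
  have h := Real.geom_mean_le_arith_mean_weighted (Finset.Icc 1 n) P
      (fun i => P i ^ (α - 1)) (fun i hi => (hP.1 i hi).le) hP.2
      (fun i hi => (Real.rpow_pos_of_pos (hP.1 i hi) _).le)
  beta_reduce at h
  have hR : ∑ i ∈ Finset.Icc 1 n, P i * P i ^ (α - 1)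
      = ∑ i ∈ Finset.Icc 1 n, P i ^ α := by
    refine Finset.sum_congr rfl fun i hi => ?_
    have hp := hP.1 i hi
    rw [show P i * P i ^ (α - 1) = P i ^ (1:ℝ) * P i ^ (α - 1) by rw [Real.rpow_one],
        ← Real.rpow_add hp]
    norm_num
  rw [hR] at h
  have hprodpos : 0 < ∏ i ∈ Finset.Icc 1 n, (P i ^ (α - 1)) ^ P i := by
    exact Finset.prod_pos fun i hi =>
      Real.rpow_pos_of_pos (Real.rpow_pos_of_pos (hP.1 i hi) _) _
  have hlog := Real.log_le_log hprodpos h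
  rw [Real.log_prod (fun i hi => (Real.rpow_pos_of_pos
      (Real.rpow_pos_of_pos (hP.1 i hi) _) _).ne')] at hlog
  calc (α - 1) * ∑ i ∈ Finset.Icc 1 n, P i * Real.log (P i)
      = ∑ i ∈ Finset.Icc 1 n, Real.log ((P i ^ (α - 1)) ^ P i) := by
        rw [Finset.mul_sum]
        refine Finset.sum_congr rfl fun i hi => ?_
        rw [Real.log_rpow (Real.rpow_pos_of_pos (hP.1 i hi) _),
            Real.log_rpow (hP.1 i hi)]
        ring
    _ ≤ _ := hlog

lemma jensen_pow (hP : IsPMF n P) {t r : ℝ} (hr : 1 ≤ r) :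
    (∑ i ∈ Finset.Icc 1 n, P i ^ (1 + t)) ^ r
      ≤ ∑ i ∈ Finset.Icc 1 n, P i ^ (1 + t * r) := by
  have h := Real.rpow_arith_mean_le_arith_mean_rpow (Finset.Icc 1 n) P
      (fun i => P i ^ t) (fun i hi => (hP.1 i hi).le) hP.2
      (fun i hi => (Real.rpow_pos_of_pos (hP.1 i hi) _).le) hr
  beta_reduce at h
  have e1 : ∑ i ∈ Finset.Icc 1 n, P i * P i ^ t
      = ∑ i ∈ Finset.Icc 1 n, P i ^ (1 + t) := by
    refine Finset.sum_congr rfl fun i hi => ?_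
    rw [show P i * P i ^ t = P i ^ (1:ℝ) * P i ^ t by rw [Real.rpow_one],
        ← Real.rpow_add (hP.1 i hi)]
  have e2 : ∑ i ∈ Finset.Icc 1 n, P i * (P i ^ t) ^ r
      = ∑ i ∈ Finset.Icc 1 n, P i ^ (1 + t * r) := by
    refine Finset.sum_congr rfl fun i hi => ?_
    rw [← Real.rpow_mul (hP.1 i hi).le,
        show P i * P i ^ (t * r) = P i ^ (1:ℝ) * P i ^ (t * r) by rw [Real.rpow_one],
        ← Real.rpow_add (hP.1 i hi)]
  rw [e1, e2] at h
  exact h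

end Stmt2Aux

namespace Stmt2Aux

lemma renyiH_anti (hP : IsPMF n P) {a b : ℝ} (ha : 0 < a) (hab : a ≤ b) :
    renyiH n b P ≤ renyiH n a P := by
  set T := ∑ i ∈ Finset.Icc 1 n, P i * Real.log (P i) with hT
  have L1 : ∀ c : ℝ, c < 1 →
      -T ≤ (1 - c)⁻¹ * Real.log (∑ i ∈ Finset.Icc 1 n, P i ^ c) := by
    intro c hc
    have hj := jensen_log hP c
    have h1c : (0:ℝ) < 1 - c := by linarith
    have h2 := mul_le_mul_of_nonneg_left hj (inv_nonneg.mpr h1c.le)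
    have hcne : (1:ℝ) - c ≠ 0 := by linarith
    calc -T = (1 - c)⁻¹ * ((c - 1) * T) := by
          rw [show (c - 1) * T = (1 - c) * (-T) by ring, inv_mul_cancel_left₀ hcne]
      _ ≤ _ := h2
  have L2 : ∀ c : ℝ, 1 < c →
      (1 - c)⁻¹ * Real.log (∑ i ∈ Finset.Icc 1 n, P i ^ c) ≤ -T := by
    intro c hc
    have hj := jensen_log hP c
    have h1c : (1:ℝ) - c < 0 := by linarith
    have h2 := mul_le_mul_of_nonpos_left hj (inv_nonpos.mpr h1c.le)
    calc (1 - c)⁻¹ * Real.log (∑ i ∈ Finset.Icc 1 n, P i ^ c)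
        ≤ (1 - c)⁻¹ * ((c - 1) * T) := h2
      _ = -T := by
          have hcne : (1:ℝ) - c ≠ 0 := by linarith
          rw [show (c - 1) * T = (1 - c) * (-T) by ring, inv_mul_cancel_left₀ hcne]
  rcases eq_or_lt_of_le hab with rfl | hlt
  · exact le_rfl
  unfold renyiH
  by_cases hb1 : b = 1
  · subst hb1
    rw [if_pos rfl, if_neg (ne_of_lt hlt)]
    exact L1 a hlt
  by_cases ha1 : a = 1
  · subst ha1
    rw [if_pos rfl, if_neg hb1]
    exact L2 b hlt
  rw [if_neg hb1, if_neg ha1]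
  rcases lt_or_gt_of_ne ha1 with haa | haa
  · rcases lt_or_gt_of_ne hb1 with hbb | hbb
    · -- a < b < 1
      have hbne : (1:ℝ) - b ≠ 0 := by linarith
      have hane : (1:ℝ) - a ≠ 0 := by linarith
      set r : ℝ := (1 - a) / (1 - b) with hr
      have hr1 : 1 ≤ r := by
        rw [hr, le_div_iff₀ (by linarith)]
        linarith
      have hjp := jensen_pow hP (t := b - 1) hr1
      have e1 : (1:ℝ) + (b - 1) = b := by ring
      have e2 : (1:ℝ) + (b - 1) * r = a := by
        rw [hr, show (b - 1) = -(1 - b) by ring, neg_mul,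
            mul_comm (1 - b), div_mul_cancel₀ _ hbne]
        ring
      rw [e1, e2] at hjp
      have hSb := S_pos hP b
      have hlog := Real.log_le_log (Real.rpow_pos_of_pos hSb r) hjp
      rw [Real.log_rpow hSb] at hlog
      have h3 := mul_le_mul_of_nonneg_left hlog (inv_nonneg.mpr (by linarith :
        (0:ℝ) ≤ 1 - a))
      calc (1 - b)⁻¹ * Real.log (∑ i ∈ Finset.Icc 1 n, P i ^ b)
          = (1 - a)⁻¹ * (r * Real.log (∑ i ∈ Finset.Icc 1 n, P i ^ b)) := by
            rw [hr, show (1 - a) / (1 - b) * Real.log (∑ i ∈ Finset.Icc 1 n, P i ^ b)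
                = (1 - a) * ((1 - b)⁻¹ * Real.log (∑ i ∈ Finset.Icc 1 n, P i ^ b)) by ring,
              inv_mul_cancel_left₀ hane]
        _ ≤ _ := h3
    · -- a < 1 < b
      exact le_trans (L2 b hbb) (L1 a haa)
  · -- 1 < a < b
    have hbb : (1:ℝ) < b := lt_trans haa hlt
    have hane : (1:ℝ) - a ≠ 0 := by linarith
    have hbne : (1:ℝ) - b ≠ 0 := by linarith
    set r : ℝ := (b - 1) / (a - 1) with hr
    have hr1 : 1 ≤ r := by
      rw [hr, le_div_iff₀ (by linarith)]
      linarith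
    have hjp := jensen_pow hP (t := a - 1) hr1
    have e1 : (1:ℝ) + (a - 1) = a := by ring
    have hane' : a - 1 ≠ 0 := by linarith
    have e2 : (1:ℝ) + (a - 1) * r = b := by
      rw [hr, mul_comm (a - 1), div_mul_cancel₀ _ hane']
      ring
    rw [e1, e2] at hjp
    have hSa := S_pos hP a
    have hlog := Real.log_le_log (Real.rpow_pos_of_pos hSa r) hjp
    rw [Real.log_rpow hSa] at hlog
    have h3 := mul_le_mul_of_nonpos_left hlog (inv_nonpos.mpr (by linarith :
      (1:ℝ) - b ≤ 0))
    calc (1 - b)⁻¹ * Real.log (∑ i ∈ Finset.Icc 1 n, P i ^ b)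
        ≤ (1 - b)⁻¹ * (r * Real.log (∑ i ∈ Finset.Icc 1 n, P i ^ a)) := h3
      _ = (1 - b)⁻¹ * (b - 1) * ((a - 1)⁻¹ * Real.log (∑ i ∈ Finset.Icc 1 n, P i ^ a)) := by
          rw [hr]; ring
      _ = (-1) * ((a - 1)⁻¹ * Real.log (∑ i ∈ Finset.Icc 1 n, P i ^ a)) := by
          rw [show (b - 1 : ℝ) = -(1 - b) by ring, mul_neg, inv_mul_cancel₀ hbne]
      _ = (1 - a)⁻¹ * Real.log (∑ i ∈ Finset.Icc 1 n, P i ^ a) := by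
          rw [show (1 - a : ℝ) = -(a - 1) by ring, inv_neg]
          ring

end Stmt2Aux

namespace Stmt2Aux

lemma renyiH_ge (hP : IsPMF n P) (hR : RatioBdd n ρ P) (hρ : 0 < ρ) (α : ℝ) :
    Real.log n - Real.log ρ ≤ renyiH n α P := by
  have hn : 1 ≤ n := pmf_one_le hP
  have hn0 : (0:ℝ) < n := by exact_mod_cast hn
  set M : ℝ := ρ / n with hM
  have hM0 : 0 < M := div_pos hρ hn0
  have hPM : ∀ i ∈ Finset.Icc 1 n, P i ≤ M := by
    intro i hi
    have h1 : (n:ℝ) * P i ≤ ρ := by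
      calc (n:ℝ) * P i = ∑ _j ∈ Finset.Icc 1 n, P i := by
            rw [Finset.sum_const, Nat.card_Icc]
            simp
          _ ≤ ∑ j ∈ Finset.Icc 1 n, ρ * P j :=
            Finset.sum_le_sum fun j hj => hR i hi j hj
          _ = ρ * ∑ j ∈ Finset.Icc 1 n, P j := by rw [Finset.mul_sum]
          _ = ρ := by rw [hP.2, mul_one]
    rw [hM, le_div_iff₀ hn0, mul_comm]
    exact h1
  have hlogM : -Real.log M = Real.log n - Real.log ρ := by
    rw [hM, Real.log_div hρ.ne' hn0.ne']
    ring
  unfold renyiH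
  by_cases hα : α = 1
  · rw [if_pos hα, ← hlogM]
    have : ∑ i ∈ Finset.Icc 1 n, P i * Real.log (P i)
        ≤ ∑ i ∈ Finset.Icc 1 n, P i * Real.log M := by
      refine Finset.sum_le_sum fun i hi => ?_
      exact mul_le_mul_of_nonneg_left
        (Real.log_le_log (hP.1 i hi) (hPM i hi)) (hP.1 i hi).le
    have h2 : ∑ i ∈ Finset.Icc 1 n, P i * Real.log M = Real.log M := by
      rw [← Finset.sum_mul, hP.2, one_mul]
    linarith
  rw [if_neg hα]
  rcases lt_or_gt_of_ne hα with hlt | hgt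
  · -- α < 1
    have key : M ^ (α - 1) ≤ ∑ i ∈ Finset.Icc 1 n, P i ^ α := by
      calc M ^ (α - 1) = (∑ i ∈ Finset.Icc 1 n, P i) * M ^ (α - 1) := by
            rw [hP.2, one_mul]
        _ = ∑ i ∈ Finset.Icc 1 n, P i * M ^ (α - 1) := by rw [Finset.sum_mul]
        _ ≤ ∑ i ∈ Finset.Icc 1 n, P i ^ α := by
            refine Finset.sum_le_sum fun i hi => ?_
            have h1 : M ^ (α - 1) ≤ P i ^ (α - 1) :=
              Real.rpow_le_rpow_of_nonpos (hP.1 i hi) (hPM i hi) (by linarith)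
            calc P i * M ^ (α - 1) ≤ P i * P i ^ (α - 1) :=
                  mul_le_mul_of_nonneg_left h1 (hP.1 i hi).le
              _ = P i ^ α := by
                  rw [show P i * P i ^ (α - 1) = P i ^ (1:ℝ) * P i ^ (α - 1) by
                      rw [Real.rpow_one], ← Real.rpow_add (hP.1 i hi)]
                  norm_num
    have hlog := Real.log_le_log (Real.rpow_pos_of_pos hM0 _) key
    rw [Real.log_rpow hM0] at hlog
    have h3 := mul_le_mul_of_nonneg_left hlog
      (inv_nonneg.mpr (by linarith : (0:ℝ) ≤ 1 - α))
    have h4 : (1 - α)⁻¹ * ((α - 1) * Real.log M) = -Real.log M := by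
      rw [show (α - 1) * Real.log M = (1 - α) * (-Real.log M) by ring,
          inv_mul_cancel_left₀ (by linarith : (1:ℝ) - α ≠ 0)]
    rw [← hlogM]
    linarith
  · -- 1 < α
    have key : ∑ i ∈ Finset.Icc 1 n, P i ^ α ≤ M ^ (α - 1) := by
      calc ∑ i ∈ Finset.Icc 1 n, P i ^ α
          ≤ ∑ i ∈ Finset.Icc 1 n, P i * M ^ (α - 1) := by
            refine Finset.sum_le_sum fun i hi => ?_
            have h1 : P i ^ (α - 1) ≤ M ^ (α - 1) :=
              Real.rpow_le_rpow (hP.1 i hi).le (hPM i hi) (by linarith)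
            calc P i ^ α = P i * P i ^ (α - 1) := by
                  rw [show P i * P i ^ (α - 1) = P i ^ (1:ℝ) * P i ^ (α - 1) by
                      rw [Real.rpow_one], ← Real.rpow_add (hP.1 i hi)]
                  norm_num
              _ ≤ P i * M ^ (α - 1) := mul_le_mul_of_nonneg_left h1 (hP.1 i hi).le
        _ = M ^ (α - 1) := by rw [← Finset.sum_mul, hP.2, one_mul]
    have hlog := Real.log_le_log (S_pos hP α) key
    rw [Real.log_rpow hM0] at hlog
    have h3 := mul_le_mul_of_nonpos_left hlog
      (inv_nonpos.mpr (by linarith : (1:ℝ) - α ≤ 0))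
    have h4 : (1 - α)⁻¹ * ((α - 1) * Real.log M) = -Real.log M := by
      rw [show (α - 1) * Real.log M = (1 - α) * (-Real.log M) by ring,
          inv_mul_cancel_left₀ (by linarith : (1:ℝ) - α ≠ 0)]
    rw [← hlogM]
    linarith

lemma uniform_pmf (hn : 1 ≤ n) : IsPMF n (fun _ => (n:ℝ)⁻¹) := by
  have hn0 : (0:ℝ) < n := by exact_mod_cast hn
  constructor
  · intro i _
    positivity
  · rw [Finset.sum_const, Nat.card_Icc]
    simp
    rw [mul_inv_cancel₀ hn0.ne']

lemma uniform_ratio (hn : 1 ≤ n) (hρ : 1 ≤ ρ) : RatioBdd n ρ (fun _ => (n:ℝ)⁻¹) := by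
  intro i _ j _
  have hn0 : (0:ℝ) < n := by exact_mod_cast hn
  nlinarith [inv_pos.mpr hn0]

lemma renyiH_uniform (hn : 1 ≤ n) (α : ℝ) :
    renyiH n α (fun _ => (n:ℝ)⁻¹) = Real.log n := by
  have hn0 : (0:ℝ) < n := by exact_mod_cast hn
  unfold renyiH
  by_cases hα : α = 1
  · rw [if_pos hα, Finset.sum_const, Nat.card_Icc]
    simp only [Nat.add_sub_cancel, nsmul_eq_mul]
    rw [Real.log_inv]
    field_simp
  · rw [if_neg hα, Finset.sum_const, Nat.card_Icc]
    simp only [Nat.add_sub_cancel, nsmul_eq_mul]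
    rw [Real.log_mul hn0.ne' (Real.rpow_pos_of_pos (inv_pos.mpr hn0) α).ne',
        Real.log_rpow (inv_pos.mpr hn0), Real.log_inv]
    rw [show Real.log n + α * -Real.log n = (1 - α) * Real.log n by ring,
        inv_mul_cancel_left₀ (sub_ne_zero.mpr (fun h => hα (by linarith)))]

end Stmt2Aux

namespace Stmt2Aux

lemma sum_double (f : ℕ → ℝ) (n : ℕ) :
    ∑ j ∈ Finset.Icc 1 (2 * n), f ((j + 1) / 2) = 2 * ∑ i ∈ Finset.Icc 1 n, f i := by
  induction n with
  | zero => simp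
  | succ m ih =>
    have h1 : 2 * (m + 1) = (2 * m + 1) + 1 := by ring
    rw [h1, Finset.sum_Icc_succ_top (by omega), Finset.sum_Icc_succ_top (by omega), ih,
        Finset.sum_Icc_succ_top (by omega : 1 ≤ m + 1)]
    have e1 : (2 * m + 1 + 1) / 2 = m + 1 := by omega
    have e2 : (2 * m + 1 + 1 + 1) / 2 = m + 1 := by omega
    rw [e1, e2]
    ring

/-- The doubled pmf. -/
noncomputable def dbl (P : ℕ → ℝ) : ℕ → ℝ := fun j => P ((j + 1) / 2) / 2

lemma dbl_idx {n j : ℕ} (hj : j ∈ Finset.Icc 1 (2 * n)) : (j + 1) / 2 ∈ Finset.Icc 1 n := by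
  rw [Finset.mem_Icc] at *
  omega

lemma dbl_pmf (hP : IsPMF n P) : IsPMF (2 * n) (dbl P) := by
  constructor
  · intro j hj
    have := hP.1 _ (dbl_idx hj)
    unfold dbl
    linarith
  · unfold dbl
    rw [show (fun j => P ((j + 1) / 2) / 2) = fun j => (fun i => P i / 2) ((j + 1) / 2) from rfl]
    rw [sum_double (fun i => P i / 2) n, ← Finset.sum_div, hP.2]
    norm_num

lemma dbl_ratio (hR : RatioBdd n ρ P) : RatioBdd (2 * n) ρ (dbl P) := by
  intro i hi j hj
  have := hR _ (dbl_idx hi) _ (dbl_idx hj)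
  unfold dbl
  rw [div_le_iff₀ (by norm_num : (0:ℝ) < 2)]
  calc P ((i + 1) / 2) ≤ ρ * P ((j + 1) / 2) := this
    _ = ρ * (P ((j + 1) / 2) / 2) * 2 := by ring

lemma dbl_renyi (hP : IsPMF n P) (α : ℝ) :
    renyiH (2 * n) α (dbl P) = renyiH n α P + Real.log 2 := by
  unfold renyiH
  by_cases hα : α = 1
  · rw [if_pos hα, if_pos hα]
    have : ∑ j ∈ Finset.Icc 1 (2 * n), dbl P j * Real.log (dbl P j)
        = 2 * ∑ i ∈ Finset.Icc 1 n, (P i / 2) * Real.log (P i / 2) := by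
      exact sum_double (fun i => (P i / 2) * Real.log (P i / 2)) n
    rw [this]
    have h2 : ∑ i ∈ Finset.Icc 1 n, (P i / 2) * Real.log (P i / 2)
        = ∑ i ∈ Finset.Icc 1 n, (P i * Real.log (P i) / 2 - P i / 2 * Real.log 2) := by
      refine Finset.sum_congr rfl fun i hi => ?_
      rw [Real.log_div (hP.1 i hi).ne' (by norm_num)]
      ring
    rw [h2, Finset.sum_sub_distrib, ← Finset.sum_div, ← Finset.sum_mul, ← Finset.sum_div, hP.2]
    ring
  · rw [if_neg hα, if_neg hα]
    have h1 : ∑ j ∈ Finset.Icc 1 (2 * n), dbl P j ^ α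
        = 2 * ∑ i ∈ Finset.Icc 1 n, (P i / 2) ^ α := by
      exact sum_double (fun i => (P i / 2) ^ α) n
    have h2 : ∑ i ∈ Finset.Icc 1 n, (P i / 2) ^ α
        = (∑ i ∈ Finset.Icc 1 n, P i ^ α) / (2:ℝ) ^ α := by
      rw [Finset.sum_div]
      refine Finset.sum_congr rfl fun i hi => ?_
      rw [Real.div_rpow (hP.1 i hi).le (by norm_num)]
    rw [h1, h2]
    have hS := S_pos hP α
    have h2α : (0:ℝ) < (2:ℝ) ^ α := Real.rpow_pos_of_pos (by norm_num) α
    rw [Real.log_mul (by norm_num) (by positivity),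
        Real.log_div hS.ne' h2α.ne', Real.log_rpow (by norm_num : (0:ℝ) < 2)]
    rw [show Real.log 2 + (Real.log (∑ i ∈ Finset.Icc 1 n, P i ^ α) - α * Real.log 2)
        = Real.log (∑ i ∈ Finset.Icc 1 n, P i ^ α) + (1 - α) * Real.log 2 by ring,
        mul_add, inv_mul_cancel_left₀ (sub_ne_zero.mpr (fun h => hα (by linarith)))]

end Stmt2Aux

namespace Stmt2Aux

lemma img_nonempty {n : ℕ} {ρ : ℝ} (hn : 1 ≤ n) (hρ : 1 ≤ ρ) (α : ℝ) :
    (renyiH n α '' {P | IsPMF n P ∧ RatioBdd n ρ P}).Nonempty :=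
  ⟨Real.log n, ⟨fun _ => (n:ℝ)⁻¹, ⟨uniform_pmf hn, uniform_ratio hn hρ⟩, renyiH_uniform hn α⟩⟩

lemma img_bdd {n : ℕ} {ρ : ℝ} (hρ : 0 < ρ) (α : ℝ) :
    BddBelow (renyiH n α '' {P | IsPMF n P ∧ RatioBdd n ρ P}) := by
  refine ⟨Real.log n - Real.log ρ, ?_⟩
  rintro y ⟨P, hP, rfl⟩
  exact renyiH_ge hP.1 hP.2 hρ α

lemma inf_le_log {n : ℕ} {ρ : ℝ} (hn : 1 ≤ n) (hρ : 1 ≤ ρ) (α : ℝ) :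
    sInf (renyiH n α '' {P | IsPMF n P ∧ RatioBdd n ρ P}) ≤ Real.log n := by
  refine csInf_le (img_bdd (by linarith) α) ?_
  exact ⟨fun _ => (n:ℝ)⁻¹, ⟨uniform_pmf hn, uniform_ratio hn hρ⟩, renyiH_uniform hn α⟩

lemma log_le_inf {n : ℕ} {ρ : ℝ} (hn : 1 ≤ n) (hρ : 1 ≤ ρ) (α : ℝ) :
    Real.log n - Real.log ρ ≤ sInf (renyiH n α '' {P | IsPMF n P ∧ RatioBdd n ρ P}) := by
  refine le_csInf (img_nonempty hn hρ α) ?_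
  rintro y ⟨P, hP, rfl⟩
  exact renyiH_ge hP.1 hP.2 (by linarith) α

end Stmt2Aux

open Stmt2Aux in
theorem stmt2 (ρ : ℝ) (hρ : 1 < ρ) (n : ℕ) (hn : 1 ≤ n) :
    (∀ α : ℝ, 0 < α → 0 ≤ cN α ρ n ∧ cN α ρ n ≤ Real.log ρ) ∧
      (∀ α : ℝ, 0 < α → cN α ρ n ≤ cN α ρ (2 * n)) ∧
      (∀ α₁ α₂ : ℝ, 0 < α₁ → α₁ ≤ α₂ → cN α₁ ρ n ≤ cN α₂ ρ n) := by
  have hρ0 : (0:ℝ) < ρ := by linarith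
  have hcNn : ∀ (α : ℝ) (m : ℕ), 0 ≤ cN α ρ m := by
    intro α m
    unfold cN
    split_ifs with h
    · exact le_rfl
    · have hm : 1 ≤ m := by omega
      have := inf_le_log hm hρ.le α
      linarith
  have hcNl : ∀ (α : ℝ) (m : ℕ), cN α ρ m ≤ Real.log ρ := by
    intro α m
    unfold cN
    split_ifs with h
    · exact Real.log_nonneg hρ.le
    · have hm : 1 ≤ m := by omega
      have := log_le_inf hm hρ.le α
      linarith
  refine ⟨fun α _ => ⟨hcNn α n, hcNl α n⟩, ?_, ?_⟩
  · intro α _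
    by_cases h1 : n ≤ 1
    · rw [cN, if_pos h1]
      exact hcNn α (2 * n)
    · have h2 : ¬ (2 * n ≤ 1) := by omega
      have hn1 : 1 ≤ n := hn
      rw [cN, if_neg h1, cN, if_neg h2]
      have hkey : sInf (renyiH (2 * n) α '' {P | IsPMF (2 * n) P ∧ RatioBdd (2 * n) ρ P})
          - Real.log 2
          ≤ sInf (renyiH n α '' {P | IsPMF n P ∧ RatioBdd n ρ P}) := by
        refine le_csInf (img_nonempty hn1 hρ.le α) ?_
        rintro y ⟨P, ⟨hP, hR⟩, rfl⟩
        have hmem : renyiH (2 * n) α (dbl P)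
            ∈ renyiH (2 * n) α '' {P | IsPMF (2 * n) P ∧ RatioBdd (2 * n) ρ P} :=
          ⟨dbl P, ⟨dbl_pmf hP, dbl_ratio hR⟩, rfl⟩
        have h3 := csInf_le (img_bdd hρ0 α) hmem
        rw [dbl_renyi hP α] at h3
        linarith
      have hcast : Real.log ((2 * n : ℕ) : ℝ) = Real.log 2 + Real.log n := by
        push_cast
        rw [Real.log_mul two_ne_zero (by positivity : ((n:ℝ)) ≠ 0)]
      rw [hcast]
      linarith
  · intro α₁ α₂ h1 h12
    by_cases h : n ≤ 1
    · rw [cN, if_pos h, cN, if_pos h]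
    · rw [cN, if_neg h, cN, if_neg h]
      have hkey : sInf (renyiH n α₂ '' {P | IsPMF n P ∧ RatioBdd n ρ P})
          ≤ sInf (renyiH n α₁ '' {P | IsPMF n P ∧ RatioBdd n ρ P}) := by
        refine le_csInf (img_nonempty hn hρ.le α₁) ?_
        rintro y ⟨P, hP, rfl⟩
        exact le_trans (csInf_le (img_bdd hρ0 α₂) ⟨P, hP, rfl⟩)
          (renyiH_anti hP.1 h1 h12)
      linarith
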